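/- Let 𝒜 be a symmetric Picard category. The assignment inv : 𝒜 ⥤ 𝒜 defined on objects by inv(a) = a^• and on morphisms by inv(f) = ((f⁻¹))^• is a functor, and it admits a braided (symmetric) strong monoidal structure whose structure morphism at a pair of objects (a, b) is the composite s_{a^•,b^•} ≫ κ_{b,a} : a^• ⊗ b^• ⟶ (a ⊗ b)^•, where s is the braiding of 𝒜. -/

import Mathlib

open CategoryTheory Category MonoidalCategory BraidedCategory

universe v u

/-- A symmetric Picard category: a symmetric monoidal groupoid equipped with, for every
object `a`, a chosen object `dual a` and a chosen isomorphism `j a : 𝟙_ C ≅ dual a ⊗ a`. -/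
class SymmetricPicard (C : Type u) [Groupoid.{v} C] [MonoidalCategory C]
    [SymmetricCategory C] where
  dual : C → C
  j : ∀ a : C, 𝟙_ C ≅ dual a ⊗ a

namespace SymmetricPicard

variable {C : Type u} [Groupoid.{v} C] [MonoidalCategory C] [SymmetricCategory C]
  [SymmetricPicard C]

/-- The dual of a morphism `f : a ⟶ b`: the unique morphism `g : dual b ⟶ dual a`
such that `(j b).hom ≫ (g ⊗ₘ inv f) = (j a).hom`. -/
noncomputable def dualHom {a b : C} (f : a ⟶ b) : dual b ⟶ dual a :=
  @Classical.epsilon _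
    ⟨(ρ_ (dual b)).inv ≫ (dual b ◁ (j a).hom) ≫ (dual b ◁ (dual a ◁ f)) ≫
      (α_ (dual b) (dual a) b).inv ≫ ((β_ (dual b) (dual a)).hom ▷ b) ≫
      (α_ (dual a) (dual b) b).hom ≫ (dual a ◁ (j b).inv) ≫ (ρ_ (dual a)).hom⟩
    (fun g => (j b).hom ≫ (g ⊗ₘ inv f) = (j a).hom)

/-- The canonical pairing `(a^• ⊗ b^•) ⊗ (b ⊗ a) ⟶ 𝟙`. -/
noncomputable def pairing (a b : C) : (dual a ⊗ dual b) ⊗ (b ⊗ a) ⟶ 𝟙_ C :=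
  (α_ (dual a) (dual b) (b ⊗ a)).hom ≫ (𝟙 (dual a) ⊗ₘ (α_ (dual b) b a).inv) ≫
    (𝟙 (dual a) ⊗ₘ ((j b).inv ⊗ₘ 𝟙 a)) ≫ (𝟙 (dual a) ⊗ₘ (λ_ a).hom) ≫ (j a).inv

/-- Laplaza's canonical arrow `κ_{a,b} : a^• ⊗ b^• ⟶ (b ⊗ a)^•`: the unique morphism `f`
such that `(f ⊗ 𝟙_{b⊗a}) ≫ j_{b⊗a}⁻¹` is the canonical pairing. -/
noncomputable def kappa (a b : C) : dual a ⊗ dual b ⟶ dual (b ⊗ a) :=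
  @Classical.epsilon _
    ⟨(ρ_ (dual a ⊗ dual b)).inv ≫ ((dual a ⊗ dual b) ◁ (j (b ⊗ a)).hom) ≫
      ((dual a ⊗ dual b) ◁ (β_ (dual (b ⊗ a)) (b ⊗ a)).hom) ≫
      (α_ (dual a ⊗ dual b) (b ⊗ a) (dual (b ⊗ a))).inv ≫
      (pairing a b ▷ dual (b ⊗ a)) ≫ (λ_ (dual (b ⊗ a))).hom⟩
    (fun f => (f ⊗ₘ 𝟙 (b ⊗ a)) ≫ (j (b ⊗ a)).inv = pairing a b)


/-- The action of the functor `inv` on morphisms: `inv(f) = (f⁻¹)^•`. -/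
noncomputable def invMap {a b : C} (f : a ⟶ b) : dual a ⟶ dual b :=
  dualHom (inv f)

/-- The monoidal structure morphism of `inv` at `(a, b)`: `s_{a^•,b^•} ≫ κ_{b,a}`. -/
noncomputable def invMu (a b : C) : dual a ⊗ dual b ⟶ dual (a ⊗ b) :=
  (β_ (dual a) (dual b)).hom ≫ kappa b a

/-! ### Auxiliary infrastructure -/

/-- Tensoring on the right with an object of a symmetric Picard category is an
equivalence of categories. -/
noncomputable def rightEquiv (c : C) : C ≌ C :=
  CategoryTheory.Equivalence.mk (tensorRight c) (tensorRight (dual c))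
    ((rightUnitorNatIso C).symm ≪≫
      (tensoringRight C).mapIso (j c ≪≫ β_ (dual c) c) ≪≫ tensorRightTensor c (dual c))
    ((tensorRightTensor (dual c) c).symm ≪≫
      (tensoringRight C).mapIso (j c).symm ≪≫ rightUnitorNatIso C)

lemma whiskerRight_inj (c : C) {x y : C} {u v : x ⟶ y} (h : u ▷ c = v ▷ c) : u = v := by
  haveI : (tensorRight c).IsEquivalence := (rightEquiv c).isEquivalence_functor
  exact (tensorRight c).map_injective (by exact h)

lemma whiskerRight_surj (c : C) {x y : C} (h : x ⊗ c ⟶ y ⊗ c) : ∃ u : x ⟶ y, u ▷ c = h := by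
  haveI : (tensorRight c).IsEquivalence := (rightEquiv c).isEquivalence_functor
  obtain ⟨u, hu⟩ := (tensorRight c).map_surjective h
  exact ⟨u, by exact hu⟩

lemma dualHom_spec {a b : C} (f : a ⟶ b) :
    (j b).hom ≫ (dualHom f ⊗ₘ inv f) = (j a).hom := by
  have h : ∃ g : dual b ⟶ dual a, (j b).hom ≫ (g ⊗ₘ inv f) = (j a).hom := by
    obtain ⟨u, hu⟩ := whiskerRight_surj b ((j b).inv ≫ (j a).hom ≫ (dual a ◁ f))
    refine ⟨u, ?_⟩
    rw [MonoidalCategory.tensorHom_def, hu]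
    simp [← MonoidalCategory.whiskerLeft_comp]
  unfold dualHom
  exact Classical.epsilon_spec h

lemma kappa_spec (a b : C) :
    (kappa a b ⊗ₘ 𝟙 (b ⊗ a)) ≫ (j (b ⊗ a)).inv = pairing a b := by
  have h : ∃ g : dual a ⊗ dual b ⟶ dual (b ⊗ a),
      (g ⊗ₘ 𝟙 (b ⊗ a)) ≫ (j (b ⊗ a)).inv = pairing a b := by
    obtain ⟨u, hu⟩ := whiskerRight_surj (b ⊗ a) (pairing a b ≫ (j (b ⊗ a)).hom)
    exact ⟨u, by rw [tensorHom_id, hu]; simp⟩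
  unfold kappa
  exact Classical.epsilon_spec h

lemma kappa_P (a b : C) :
    kappa a b ▷ (b ⊗ a) ≫ (j (b ⊗ a)).inv = pairing a b := by
  have := kappa_spec a b
  rwa [tensorHom_id] at this

lemma P_inj {c X : C} {u v : X ⟶ dual c}
    (h : u ▷ c ≫ (j c).inv = v ▷ c ≫ (j c).inv) : u = v :=
  whiskerRight_inj c (by rwa [cancel_mono] at h)

lemma invMap_P {a b : C} (f : a ⟶ b) :
    invMap f ▷ b ≫ (j b).inv = (dual a ◁ inv f) ≫ (j a).inv := by
  have h := dualHom_spec (inv f)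
  rw [IsIso.inv_inv, MonoidalCategory.tensorHom_def] at h
  unfold invMap
  have h2 : dualHom (inv f) ▷ a = (j a).inv ≫ (j b).hom ≫ (dual b ◁ inv f) := by
    rw [← h]
    simp [← MonoidalCategory.whiskerLeft_comp]
  rw [← cancel_epi (dual a ◁ f), whisker_exchange_assoc, h2]
  simp only [← MonoidalCategory.whiskerLeft_comp, assoc, Iso.inv_hom_id_assoc]
  simp

/-! ### Pure symmetric-monoidal chases -/

section Chases

lemma chase1 {P Q A B : C} (e₁ : P ⊗ A ⟶ 𝟙_ C) (e₂ : Q ⊗ B ⟶ 𝟙_ C) :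
    ((β_ P Q).hom ▷ (A ⊗ B)) ≫ (α_ Q P (A ⊗ B)).hom ≫ (Q ◁ (α_ P A B).inv) ≫
      (Q ◁ (e₁ ▷ B)) ≫ (Q ◁ (λ_ B).hom) ≫ e₂ =
    tensorμ P Q A B ≫ (e₁ ⊗ₘ e₂) ≫ (λ_ (𝟙_ C)).hom := by
  have h1a : (α_ (P ⊗ A) Q B).inv ≫ ((β_ (P ⊗ A) Q).hom ▷ B) ≫ (α_ Q (P ⊗ A) B).hom ≫
      (Q ◁ (e₁ ▷ B)) ≫ (Q ◁ (λ_ B).hom) =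
      (e₁ ▷ (Q ⊗ B)) ≫ (λ_ (Q ⊗ B)).hom := by
    calc (α_ (P ⊗ A) Q B).inv ≫ ((β_ (P ⊗ A) Q).hom ▷ B) ≫ (α_ Q (P ⊗ A) B).hom ≫
        (Q ◁ (e₁ ▷ B)) ≫ (Q ◁ (λ_ B).hom)
        = 𝟙 _ ⊗≫ (((β_ ((P ⊗ A : C)) Q).hom ≫ (Q ◁ e₁)) ▷ B) ⊗≫ (Q ◁ (λ_ B).hom) := by
          monoidal
      _ = 𝟙 _ ⊗≫ (((e₁ ▷ Q) ≫ (β_ (𝟙_ C) Q).hom) ▷ B) ⊗≫ (Q ◁ (λ_ B).hom) := by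
          rw [braiding_naturality_left]
      _ = (e₁ ▷ (Q ⊗ B)) ≫ (λ_ (Q ⊗ B)).hom := by
          rw [braiding_tensorUnit_left]; monoidal
  have h2 : tensorμ P Q A B ≫ (α_ (P ⊗ A) Q B).inv ≫ ((β_ (P ⊗ A) Q).hom ▷ B) ≫
      (α_ Q (P ⊗ A) B).hom =
      ((β_ P Q).hom ▷ (A ⊗ B)) ≫ (α_ Q P (A ⊗ B)).hom ≫ (Q ◁ (α_ P A B).inv) := by
    calc tensorμ P Q A B ≫ (α_ (P ⊗ A) Q B).inv ≫ ((β_ (P ⊗ A) Q).hom ▷ B) ≫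
        (α_ Q (P ⊗ A) B).hom
        = 𝟙 _ ⊗≫ (P ◁ (((β_ Q A).hom ≫ (β_ A Q).hom) ▷ B)) ⊗≫
            (((β_ P Q).hom ▷ A) ▷ B) ⊗≫ 𝟙 _ := by
          rw [braiding_tensor_left_hom]; dsimp only [tensorμ]; monoidal
      _ = ((β_ P Q).hom ▷ (A ⊗ B)) ≫ (α_ Q P (A ⊗ B)).hom ≫ (Q ◁ (α_ P A B).inv) := by
          rw [SymmetricCategory.symmetry]; monoidal
  symm
  rw [MonoidalCategory.tensorHom_def]
  simp only [assoc, MonoidalCategory.leftUnitor_naturality]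
  rw [← reassoc_of% h1a, reassoc_of% h2]

lemma chase2 {P Q A B : C} (e₁ : P ⊗ A ⟶ 𝟙_ C) (e₂ : Q ⊗ B ⟶ 𝟙_ C) :
    (α_ P Q (B ⊗ A)).hom ≫ (P ◁ (α_ Q B A).inv) ≫ (P ◁ (e₂ ▷ A)) ≫
      (P ◁ (λ_ A).hom) ≫ e₁ =
    ((P ⊗ Q) ◁ (β_ B A).hom) ≫ tensorμ P Q A B ≫ (e₁ ⊗ₘ e₂) ≫ (λ_ (𝟙_ C)).hom := by
  have hsa : (α_ P A (Q ⊗ B)).hom ≫ (P ◁ (β_ A ((Q ⊗ B : C))).hom) ≫ (P ◁ (e₂ ▷ A)) ≫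
      (P ◁ (λ_ A).hom) = ((P ⊗ A) ◁ e₂) ≫ (ρ_ (P ⊗ A)).hom := by
    calc (α_ P A (Q ⊗ B)).hom ≫ (P ◁ (β_ A ((Q ⊗ B : C))).hom) ≫ (P ◁ (e₂ ▷ A)) ≫
        (P ◁ (λ_ A).hom)
        = 𝟙 _ ⊗≫ (P ◁ ((β_ A ((Q ⊗ B : C))).hom ≫ (e₂ ▷ A))) ⊗≫ (P ◁ (λ_ A).hom) := by
          monoidal
      _ = 𝟙 _ ⊗≫ (P ◁ ((A ◁ e₂) ≫ (β_ A (𝟙_ C)).hom)) ⊗≫ (P ◁ (λ_ A).hom) := by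
          rw [braiding_naturality_right]
      _ = ((P ⊗ A) ◁ e₂) ≫ (ρ_ (P ⊗ A)).hom := by
          rw [braiding_tensorUnit_right]; monoidal
  have hs2 : ((P ⊗ Q) ◁ (β_ B A).hom) ≫ tensorμ P Q A B ≫ (α_ P A (Q ⊗ B)).hom ≫
      (P ◁ (β_ A ((Q ⊗ B : C))).hom) =
      (α_ P Q (B ⊗ A)).hom ≫ (P ◁ (α_ Q B A).inv) := by
    calc ((P ⊗ Q) ◁ (β_ B A).hom) ≫ tensorμ P Q A B ≫ (α_ P A (Q ⊗ B)).hom ≫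
        (P ◁ (β_ A ((Q ⊗ B : C))).hom)
        = 𝟙 _ ⊗≫ (P ◁ (Q ◁ (β_ B A).hom)) ⊗≫
            (P ◁ (((β_ Q A).hom ≫ (β_ A Q).hom) ▷ B)) ⊗≫
            (P ◁ (Q ◁ (β_ A B).hom)) ⊗≫ 𝟙 _ := by
          rw [braiding_tensor_right_hom]; dsimp only [tensorμ]; monoidal
      _ = 𝟙 _ ⊗≫ (P ◁ (Q ◁ ((β_ B A).hom ≫ (β_ A B).hom))) ⊗≫ 𝟙 _ := by
          rw [SymmetricCategory.symmetry]; monoidal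
      _ = (α_ P Q (B ⊗ A)).hom ≫ (P ◁ (α_ Q B A).inv) := by
          rw [SymmetricCategory.symmetry]; monoidal
  symm
  rw [MonoidalCategory.tensorHom_def', unitors_equal]
  simp only [assoc, MonoidalCategory.rightUnitor_naturality]
  rw [← reassoc_of% hsa, reassoc_of% hs2]

lemma mu_delta (X₁ X₂ Y₁ Y₂ : C) : tensorμ X₁ X₂ Y₁ Y₂ = tensorδ X₁ Y₁ X₂ Y₂ := by
  dsimp only [tensorμ, tensorδ]
  rw [← SymmetricCategory.braiding_swap_eq_inv_braiding]

lemma inv_delta (X₁ X₂ Y₁ Y₂ : C) :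
    inv (tensorδ X₁ X₂ Y₁ Y₂) = tensorμ X₁ X₂ Y₁ Y₂ :=
  (IsIso.inv_eq_of_hom_inv_id (tensorδ_tensorμ X₁ X₂ Y₁ Y₂))

lemma assoc_mu (P Q R A B D : C) :
    (((P ⊗ Q) ⊗ R) ◁ (α_ A B D).inv) ≫ tensorμ (P ⊗ Q) R (A ⊗ B) D ≫
        (tensorμ P Q A B ▷ (R ⊗ D)) =
      ((α_ P Q R).hom ▷ (A ⊗ (B ⊗ D))) ≫ tensorμ P (Q ⊗ R) A (B ⊗ D) ≫
        ((P ⊗ A) ◁ tensorμ Q R B D) ≫ (α_ (P ⊗ A) (Q ⊗ B) (R ⊗ D)).inv := by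
  have h := tensor_associativity (C := C) P A Q B R D
  simp only [mu_delta] at h
  have h' := congrArg (fun (m : _ ⟶ _) => inv m) h
  simp only [IsIso.inv_comp, inv_delta, inv_whiskerLeft, inv_whiskerRight, inv_tensor,
    IsIso.Iso.inv_hom, assoc] at h'
  calc (((P ⊗ Q) ⊗ R) ◁ (α_ A B D).inv) ≫ tensorμ (P ⊗ Q) R (A ⊗ B) D ≫
        (tensorμ P Q A B ▷ (R ⊗ D))
      = ((α_ P Q R).hom ▷ (A ⊗ (B ⊗ D))) ≫ ((α_ P Q R).inv ⊗ₘ (α_ A B D).inv) ≫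
          tensorμ (P ⊗ Q) R (A ⊗ B) D ≫ (tensorμ P Q A B ▷ (R ⊗ D)) := by
        rw [MonoidalCategory.tensorHom_def]
        simp only [assoc, ← comp_whiskerRight_assoc, Iso.hom_inv_id, id_whiskerRight,
          id_comp]
    _ = ((α_ P Q R).hom ▷ (A ⊗ (B ⊗ D))) ≫ tensorμ P (Q ⊗ R) A (B ⊗ D) ≫
        ((P ⊗ A) ◁ tensorμ Q R B D) ≫ (α_ (P ⊗ A) (Q ⊗ B) (R ⊗ D)).inv := by
        rw [h']

lemma chase3 {P Q R A B D : C} (e₁ : P ⊗ A ⟶ 𝟙_ C) (e₂ : Q ⊗ B ⟶ 𝟙_ C)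
    (e₃ : R ⊗ D ⟶ 𝟙_ C) :
    (((P ⊗ Q) ⊗ R) ◁ (α_ A B D).inv) ≫ tensorμ (P ⊗ Q) R (A ⊗ B) D ≫
      ((tensorμ P Q A B ≫ (e₁ ⊗ₘ e₂) ≫ (λ_ (𝟙_ C)).hom) ⊗ₘ e₃) ≫ (λ_ (𝟙_ C)).hom =
    ((α_ P Q R).hom ▷ (A ⊗ (B ⊗ D))) ≫ tensorμ P (Q ⊗ R) A (B ⊗ D) ≫
      (e₁ ⊗ₘ (tensorμ Q R B D ≫ (e₂ ⊗ₘ e₃) ≫ (λ_ (𝟙_ C)).hom)) ≫ (λ_ (𝟙_ C)).hom := by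
  have split1 : (tensorμ P Q A B ≫ (e₁ ⊗ₘ e₂) ≫ (λ_ (𝟙_ C)).hom) ⊗ₘ e₃
      = (tensorμ P Q A B ▷ (R ⊗ D)) ≫ ((e₁ ⊗ₘ e₂) ⊗ₘ e₃) ≫
        ((λ_ (𝟙_ C)).hom ⊗ₘ 𝟙 (𝟙_ C)) := by
    rw [← tensorHom_id, tensorHom_comp_tensorHom, tensorHom_comp_tensorHom, id_comp, comp_id]
  have split2 : e₁ ⊗ₘ (tensorμ Q R B D ≫ (e₂ ⊗ₘ e₃) ≫ (λ_ (𝟙_ C)).hom)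
      = ((P ⊗ A) ◁ tensorμ Q R B D) ≫ (e₁ ⊗ₘ (e₂ ⊗ₘ e₃)) ≫
        (𝟙 (𝟙_ C) ⊗ₘ (λ_ (𝟙_ C)).hom) := by
    rw [← id_tensorHom, tensorHom_comp_tensorHom, tensorHom_comp_tensorHom, id_comp, comp_id]
  have assoc3 : e₁ ⊗ₘ (e₂ ⊗ₘ e₃) = (α_ (P ⊗ A) (Q ⊗ B) (R ⊗ D)).inv ≫
      ((e₁ ⊗ₘ e₂) ⊗ₘ e₃) ≫ (α_ (𝟙_ C) (𝟙_ C) (𝟙_ C)).hom := by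
    rw [associator_naturality e₁ e₂ e₃, Iso.inv_hom_id_assoc]
  have unitl : ((λ_ (𝟙_ C)).hom ⊗ₘ 𝟙 (𝟙_ C)) ≫ (λ_ (𝟙_ C)).hom =
      (α_ (𝟙_ C) (𝟙_ C) (𝟙_ C)).hom ≫ (𝟙 (𝟙_ C) ⊗ₘ (λ_ (𝟙_ C)).hom) ≫
        (λ_ (𝟙_ C)).hom := by
    monoidal
  rw [split1, split2, assoc3]
  simp only [assoc]
  rw [unitl, reassoc_of% assoc_mu P Q R A B D]

lemma chase4 {N P A : C} (η : 𝟙_ C ⟶ N) (e₀ : N ⊗ 𝟙_ C ⟶ 𝟙_ C) (e₁ : P ⊗ A ⟶ 𝟙_ C)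
    (hη : (η ▷ 𝟙_ C) ≫ e₀ = (λ_ (𝟙_ C)).hom) :
    ((η ⊗ₘ 𝟙 P) ▷ A) ≫ ((N ⊗ P) ◁ (λ_ A).inv) ≫ tensorμ N P (𝟙_ C) A ≫
      (e₀ ⊗ₘ e₁) ≫ (λ_ (𝟙_ C)).hom = (λ_ P).hom ▷ A ≫ e₁ := by
  rw [← whisker_exchange_assoc, tensorμ_natural_left_assoc, tensorHom_comp_tensorHom_assoc, hη]
  simp only [id_whiskerRight, id_comp]
  have tail : ((λ_ (𝟙_ C)).hom ⊗ₘ e₁) ≫ (λ_ (𝟙_ C)).hom =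
      ((λ_ (𝟙_ C)).hom ▷ (P ⊗ A)) ≫ (λ_ (P ⊗ A)).hom ≫ e₁ := by
    rw [MonoidalCategory.tensorHom_def]
    simp only [assoc, MonoidalCategory.leftUnitor_naturality]
  rw [tail, ← leftUnitor_monoidal_assoc]
  rw [← id_tensorHom, tensorHom_comp_tensorHom_assoc]
  simp

lemma chase5 {N P A : C} (η : 𝟙_ C ⟶ N) (e₀ : N ⊗ 𝟙_ C ⟶ 𝟙_ C) (e₁ : P ⊗ A ⟶ 𝟙_ C)
    (hη : (η ▷ 𝟙_ C) ≫ e₀ = (λ_ (𝟙_ C)).hom) :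
    ((𝟙 P ⊗ₘ η) ▷ A) ≫ ((P ⊗ N) ◁ (ρ_ A).inv) ≫ tensorμ P N A (𝟙_ C) ≫
      (e₁ ⊗ₘ e₀) ≫ (λ_ (𝟙_ C)).hom = (ρ_ P).hom ▷ A ≫ e₁ := by
  rw [← whisker_exchange_assoc, tensorμ_natural_left_assoc, tensorHom_comp_tensorHom_assoc, hη]
  simp only [id_whiskerRight, id_comp]
  have tail : (e₁ ⊗ₘ (λ_ (𝟙_ C)).hom) ≫ (λ_ (𝟙_ C)).hom =
      ((P ⊗ A) ◁ (λ_ (𝟙_ C)).hom) ≫ (ρ_ (P ⊗ A)).hom ≫ e₁ := by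
    rw [MonoidalCategory.tensorHom_def']
    simp only [assoc]
    rw [show (e₁ ▷ (𝟙_ C)) ≫ (λ_ (𝟙_ C)).hom = (ρ_ (P ⊗ A)).hom ≫ e₁ from by
      rw [unitors_equal, MonoidalCategory.rightUnitor_naturality]]
  rw [tail, ← rightUnitor_monoidal_assoc]
  rw [← id_tensorHom, tensorHom_comp_tensorHom_assoc]
  simp

lemma chase6 {P Q A B : C} (e₁ : P ⊗ A ⟶ 𝟙_ C) (e₂ : Q ⊗ B ⟶ 𝟙_ C) :
    ((β_ P Q).hom ▷ (B ⊗ A)) ≫ tensorμ Q P B A ≫ (e₂ ⊗ₘ e₁) ≫ (λ_ (𝟙_ C)).hom =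
    ((P ⊗ Q) ◁ (β_ A B).inv) ≫ tensorμ P Q A B ≫ (e₁ ⊗ₘ e₂) ≫ (λ_ (𝟙_ C)).hom := by
  have c2s := chase2 (P := Q) (Q := P) (A := B) (B := A) e₂ e₁
  have c1 := chase1 e₁ e₂
  calc ((β_ P Q).hom ▷ (B ⊗ A)) ≫ tensorμ Q P B A ≫ (e₂ ⊗ₘ e₁) ≫ (λ_ (𝟙_ C)).hom
      = ((β_ P Q).hom ▷ (B ⊗ A)) ≫ ((Q ⊗ P) ◁ (β_ A B).inv) ≫
          ((Q ⊗ P) ◁ (β_ A B).hom) ≫ tensorμ Q P B A ≫ (e₂ ⊗ₘ e₁) ≫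
            (λ_ (𝟙_ C)).hom := by
        rw [whiskerLeft_inv_hom_assoc]
    _ = ((β_ P Q).hom ▷ (B ⊗ A)) ≫ ((Q ⊗ P) ◁ (β_ A B).inv) ≫
          (α_ Q P (A ⊗ B)).hom ≫ (Q ◁ (α_ P A B).inv) ≫ (Q ◁ (e₁ ▷ B)) ≫
            (Q ◁ (λ_ B).hom) ≫ e₂ := by
        rw [← c2s]
    _ = ((P ⊗ Q) ◁ (β_ A B).inv) ≫ ((β_ P Q).hom ▷ (A ⊗ B)) ≫
          (α_ Q P (A ⊗ B)).hom ≫ (Q ◁ (α_ P A B).inv) ≫ (Q ◁ (e₁ ▷ B)) ≫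
            (Q ◁ (λ_ B).hom) ≫ e₂ := by
        rw [← whisker_exchange_assoc]
    _ = ((P ⊗ Q) ◁ (β_ A B).inv) ≫ tensorμ P Q A B ≫ (e₁ ⊗ₘ e₂) ≫ (λ_ (𝟙_ C)).hom := by
        rw [c1]

end Chases

lemma pairing_eq (a b : C) :
    pairing a b =
      (α_ (dual a) (dual b) (b ⊗ a)).hom ≫ (dual a ◁ (α_ (dual b) b a).inv) ≫
        (dual a ◁ ((j b).inv ▷ a)) ≫ (dual a ◁ (λ_ a).hom) ≫ (j a).inv := by
  simp [pairing]

lemma invMu_P (a b : C) :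
    invMu a b ▷ (a ⊗ b) ≫ (j (a ⊗ b)).inv =
      tensorμ (dual a) (dual b) a b ≫ ((j a).inv ⊗ₘ (j b).inv) ≫ (λ_ (𝟙_ C)).hom := by
  rw [invMu, comp_whiskerRight, assoc, kappa_P, pairing_eq, ← chase1]

lemma pairing_star (a b : C) :
    pairing a b =
      ((dual a ⊗ dual b) ◁ (β_ b a).hom) ≫ tensorμ (dual a) (dual b) a b ≫
        ((j a).inv ⊗ₘ (j b).inv) ≫ (λ_ (𝟙_ C)).hom := by
  rw [pairing_eq, ← chase2]

lemma eps_unit :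
    (((j (𝟙_ C)).hom ≫ (ρ_ (dual (𝟙_ C))).hom) ▷ (𝟙_ C)) ≫ (j (𝟙_ C)).inv =
      (λ_ (𝟙_ C)).hom := by
  rw [comp_whiskerRight, assoc,
    show (ρ_ (dual (𝟙_ C))).hom ▷ (𝟙_ C) = (ρ_ (dual (𝟙_ C) ⊗ 𝟙_ C)).hom from by monoidal,
    MonoidalCategory.rightUnitor_naturality_assoc, Iso.hom_inv_id, comp_id, unitors_equal]

/-- The assignment `inv : a ↦ a^•`, `f ↦ (f⁻¹)^•` is a functor `C ⥤ C` and admits a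
braided (symmetric) strong monoidal structure whose structure morphism at `(a, b)` is
`s_{a^•,b^•} ≫ κ_{b,a} : a^• ⊗ b^• ⟶ (a ⊗ b)^•`:  it is functorial, the structure
morphisms are natural isomorphisms, there is a (necessarily invertible) unit comparison
morphism making the lax monoidal associativity and unitality axioms hold, and the
structure is compatible with the braidings. -/
theorem statement6 :
    -- functoriality of `inv`
    (∀ a : C, invMap (𝟙 a) = 𝟙 (dual a)) ∧
    (∀ {a b c : C} (f : a ⟶ b) (g : b ⟶ c), invMap (f ≫ g) = invMap f ≫ invMap g) ∧
    -- naturality of the structure morphisms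
    (∀ {a a' b b' : C} (f : a ⟶ a') (g : b ⟶ b'),
        (invMap f ⊗ₘ invMap g) ≫ invMu a' b' = invMu a b ≫ invMap (f ⊗ₘ g)) ∧
    -- strong: the structure morphisms are isomorphisms
    (∀ a b : C, IsIso (invMu a b)) ∧
    -- unit comparison isomorphism and the monoidal coherence axioms
    (∃ ε : 𝟙_ C ≅ dual (𝟙_ C),
       (∀ a b c : C,
          (invMu a b ⊗ₘ 𝟙 (dual c)) ≫ invMu (a ⊗ b) c ≫ invMap (α_ a b c).hom =
            (α_ (dual a) (dual b) (dual c)).hom ≫ (𝟙 (dual a) ⊗ₘ invMu b c) ≫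
              invMu a (b ⊗ c)) ∧
       (∀ a : C, (λ_ (dual a)).hom =
          (ε.hom ⊗ₘ 𝟙 (dual a)) ≫ invMu (𝟙_ C) a ≫ invMap (λ_ a).hom) ∧
       (∀ a : C, (ρ_ (dual a)).hom =
          (𝟙 (dual a) ⊗ₘ ε.hom) ≫ invMu a (𝟙_ C) ≫ invMap (ρ_ a).hom)) ∧
    -- the monoidal structure is braided (symmetric)
    (∀ a b : C,
        (β_ (dual a) (dual b)).hom ≫ invMu b a = invMu a b ≫ invMap (β_ a b).hom) := by
  refine ⟨?_, ?_, ?_, ?_, ?_, ?_⟩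
  · -- invMap id
    intro a
    apply P_inj (c := a)
    rw [invMap_P]
    simp
  · -- invMap comp
    intro a b c f g
    apply P_inj (c := c)
    rw [invMap_P, comp_whiskerRight, assoc, invMap_P, ← whisker_exchange_assoc, invMap_P]
    rw [IsIso.inv_comp, MonoidalCategory.whiskerLeft_comp, assoc]
  · -- naturality
    intro a a' b b' f g
    have hinv : CategoryTheory.inv (f ⊗ₘ g) = CategoryTheory.inv f ⊗ₘ CategoryTheory.inv g := by
      apply IsIso.inv_eq_of_hom_inv_id
      rw [tensorHom_comp_tensorHom]
      simp
    apply P_inj (c := a' ⊗ b')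
    simp only [comp_whiskerRight, assoc]
    rw [invMap_P, hinv, ← whisker_exchange_assoc, invMu_P, invMu_P,
      tensorμ_natural_left_assoc, tensorμ_natural_right_assoc,
      tensorHom_comp_tensorHom_assoc, tensorHom_comp_tensorHom_assoc, invMap_P, invMap_P]
  · -- isos
    intro a b
    infer_instance
  · -- unit + coherence
    refine ⟨j (𝟙_ C) ≪≫ ρ_ (dual (𝟙_ C)), ?_, ?_, ?_⟩
    · -- associativity
      intro a b c
      apply P_inj (c := a ⊗ (b ⊗ c))
      simp only [comp_whiskerRight, assoc]
      rw [invMap_P, show CategoryTheory.inv (α_ a b c).hom = (α_ a b c).inv from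
        IsIso.Iso.inv_hom _, ← whisker_exchange_assoc, invMu_P,
        ← whisker_exchange_assoc, tensorμ_natural_left_assoc, invMu_P,
        tensorμ_natural_left_assoc, tensorHom_comp_tensorHom_assoc, invMu_P,
        tensorHom_comp_tensorHom_assoc, invMu_P]
      simp only [id_whiskerRight, id_comp, comp_id]
      exact chase3 (j a).inv (j b).inv (j c).inv
    · -- left unitality
      intro a
      apply P_inj (c := a)
      simp only [comp_whiskerRight, assoc, Iso.trans_hom]
      rw [invMap_P, show CategoryTheory.inv (λ_ a).hom = (λ_ a).inv from
        IsIso.Iso.inv_hom _, ← whisker_exchange_assoc, invMu_P]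
      rw [chase4 ((j (𝟙_ C)).hom ≫ (ρ_ (dual (𝟙_ C))).hom) (j (𝟙_ C)).inv (j a).inv
        eps_unit]
    · -- right unitality
      intro a
      apply P_inj (c := a)
      simp only [comp_whiskerRight, assoc, Iso.trans_hom]
      rw [invMap_P, show CategoryTheory.inv (ρ_ a).hom = (ρ_ a).inv from
        IsIso.Iso.inv_hom _, ← whisker_exchange_assoc, invMu_P]
      rw [chase5 ((j (𝟙_ C)).hom ≫ (ρ_ (dual (𝟙_ C))).hom) (j (𝟙_ C)).inv (j a).inv
        eps_unit]
  · -- braided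
    intro a b
    apply P_inj (c := b ⊗ a)
    simp only [comp_whiskerRight, assoc]
    rw [invMap_P, show CategoryTheory.inv (β_ a b).hom = (β_ a b).inv from
      IsIso.Iso.inv_hom _, ← whisker_exchange_assoc, invMu_P, invMu_P]
    exact chase6 (j a).inv (j b).inv

end SymmetricPicard
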